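/- Let ψ(w) = w^{1/β} on a sector {ρe^{iθ} : 0 < θ < 2πβ/(1+β), 0<ρ<1} and Φ(z) = |z|^{β−1}z. Then the composition Φ ∘ ψ is bi-Lipschitz onto its image. -/

import Mathlib

/-- The sector 0 < arg w < 2πβ/(1+β), 0 < |w| < 1. -/
def sector (β : ℝ) : Set ℂ :=
  {w : ℂ | 0 < ‖w‖ ∧ ‖w‖ < 1 ∧
    0 < Complex.arg w ∧ Complex.arg w < 2 * Real.pi * β / (1 + β)}

/-- Φ ∘ ψ (w) = |w|^{1−1/β} • w^{1/β}, where ψ(w) = w^{1/β} (principal branch) and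
Φ(z) = |z|^{β−1} z. -/
noncomputable def phiPsi (β : ℝ) (w : ℂ) : ℂ :=
  (‖w‖ ^ (1 - 1 / β)) • (w ^ ((1 : ℂ) / (β : ℂ)))

/-- On nonzero `w`, `phiPsi β w = |w| e^{i arg w / β}`. -/
lemma phiPsi_eq (β : ℝ) (w : ℂ) (hw : w ≠ 0) :
    phiPsi β w = (‖w‖ : ℂ) * Complex.exp ((Complex.arg w / β : ℝ) * Complex.I) := by
  have hr : (0:ℝ) < ‖w‖ := norm_pos_iff.mpr hw
  unfold phiPsi
  rw [Complex.cpow_def_of_ne_zero hw]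
  have hlog : Complex.log w = (Real.log (‖w‖) : ℂ) + (Complex.arg w : ℝ) * Complex.I :=
    rfl
  rw [hlog, add_mul, Complex.exp_add, Complex.real_smul]
  have h1 : (Real.log (‖w‖) : ℂ) * (1 / (β:ℂ)) = ((Real.log (‖w‖) / β : ℝ) : ℂ) := by
    push_cast; ring
  have h2 : ((Complex.arg w : ℝ) : ℂ) * Complex.I * (1 / (β:ℂ)) = ((Complex.arg w / β : ℝ) : ℂ) * Complex.I := by
    push_cast; ring
  rw [h1, h2, ← Complex.ofReal_exp]
  have h3 : Real.exp (Real.log (‖w‖) / β) = ‖w‖ ^ (1/β : ℝ) := by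
    rw [Real.rpow_def_of_pos hr]; ring_nf
  rw [h3, ← mul_assoc, ← Complex.ofReal_mul, ← Real.rpow_add hr]
  norm_num

/-- Polar distance formula. -/
lemma polar_dist_sq (r r' a b : ℝ) (hr : 0 ≤ r) (hr' : 0 ≤ r') :
    dist ((r:ℂ) * Complex.exp ((a:ℝ) * Complex.I)) ((r':ℂ) * Complex.exp ((b:ℝ) * Complex.I)) ^ 2
      = (r - r')^2 + 4 * r * r' * Real.sin ((a - b)/2) ^ 2 := by
  rw [Complex.dist_eq, Complex.sq_norm, Complex.normSq_sub]
  have e1 : ∀ s t : ℝ, 0 ≤ s → Complex.normSq ((s:ℂ) * Complex.exp ((t:ℝ) * Complex.I)) = s^2 := by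
    intro s t hs
    rw [Complex.normSq_mul, Complex.normSq_eq_norm_sq, Complex.normSq_eq_norm_sq,
      Complex.norm_exp_ofReal_mul_I]
    simp [sq_abs, _root_.abs_of_nonneg hs]
  rw [e1 r a hr, e1 r' b hr']
  have e2 : ((r:ℂ) * Complex.exp ((a:ℝ) * Complex.I) *
      (starRingEnd ℂ) ((r':ℂ) * Complex.exp ((b:ℝ) * Complex.I))).re
      = r * r' * Real.cos (a - b) := by
    rw [map_mul, ← Complex.exp_conj]
    have hc : (starRingEnd ℂ) ((b:ℝ) * Complex.I) = -((b:ℝ) * Complex.I) := by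
      simp [Complex.conj_ofReal]
    rw [hc, Complex.conj_ofReal]
    have : (r:ℂ) * Complex.exp ((a:ℝ) * Complex.I) * ((r':ℂ) * Complex.exp (-((b:ℝ) * Complex.I)))
        = ((r * r' : ℝ) : ℂ) * Complex.exp (((a - b : ℝ)) * Complex.I) := by
      rw [show (↑(a - b) : ℂ) * Complex.I = (a:ℝ) * Complex.I + -((b:ℝ)*Complex.I) by
        push_cast; ring, Complex.exp_add]
      push_cast; ring
    rw [this, Complex.re_ofReal_mul, Complex.exp_ofReal_mul_I_re]
  rw [e2]
  have : Real.cos (a - b) = 1 - 2 * Real.sin ((a-b)/2)^2 := by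
    rw [Real.sin_sq_eq_half_sub, mul_div_cancel₀ _ (two_ne_zero)]; ring
  rw [this]; ring

/-- Concavity lower bound for sin on `[0, M]`. -/
lemma sin_concave_lb {M t : ℝ} (hM0 : 0 < M) (hMπ : M ≤ Real.pi) (ht0 : 0 ≤ t) (ht : t ≤ M) :
    t / M * Real.sin M ≤ Real.sin t := by
  have ha' : (0:ℝ) ≤ 1 - t/M := by rw [sub_nonneg, div_le_one hM0]; exact ht
  have hb' : (0:ℝ) ≤ t/M := by positivity
  have hab : (1 - t/M) + t/M = 1 := by ring
  have h := strictConcaveOn_sin_Icc.concaveOn.2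
    (show (0:ℝ) ∈ Set.Icc 0 Real.pi from ⟨le_rfl, Real.pi_pos.le⟩)
    (show M ∈ Set.Icc 0 Real.pi from ⟨hM0.le, hMπ⟩) ha' hb' hab
  simp only [smul_eq_mul, mul_zero, zero_add, Real.sin_zero, add_zero] at h
  rwa [div_mul_cancel₀ _ hM0.ne'] at h

/-- Key sine-square comparison. -/
lemma sin_sq_key (β : ℝ) (hβ : 0 < β) (hβ1 : β < 1) (D : ℝ)
    (hD : |D| < 2 * Real.pi * β / (1 + β)) :
    (Real.sin (Real.pi/(1+β)) / (Real.pi/(1+β)))^2 * Real.sin (D/2)^2 ≤ Real.sin (D/(2*β))^2 ∧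
    Real.sin (D/(2*β))^2 ≤ (Real.pi/(2*β))^2 * Real.sin (D/2)^2 := by
  have hπ := Real.pi_pos
  have h1β : (0:ℝ) < 1 + β := by linarith
  set M : ℝ := Real.pi / (1 + β) with hM
  have hM0 : 0 < M := by positivity
  have hMπ : M < Real.pi := by
    rw [hM, div_lt_iff₀ h1β]; nlinarith
  have hsinM : 0 < Real.sin M := Real.sin_pos_of_pos_of_lt_pi hM0 hMπ
  have hc0 : 0 < Real.sin M / M := by positivity
  -- replace D by x = |D|
  have hs2 : Real.sin (D/2)^2 = Real.sin (|D|/2)^2 := by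
    rcases abs_cases D with ⟨h, _⟩ | ⟨h, _⟩ <;> rw [h]
    rw [neg_div, Real.sin_neg, neg_sq]
  have hs2β : Real.sin (D/(2*β))^2 = Real.sin (|D|/(2*β))^2 := by
    rcases abs_cases D with ⟨h, _⟩ | ⟨h, _⟩ <;> rw [h]
    rw [neg_div, Real.sin_neg, neg_sq]
  rw [hs2, hs2β]
  set x : ℝ := |D| with hx
  have hx0 : 0 ≤ x := abs_nonneg _
  have hxS : x < 2 * β * M := by
    have : 2 * Real.pi * β / (1 + β) = 2 * β * M := by rw [hM]; field_simp
    rw [← this]; exact hD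
  have hMe : M * (1+β) = Real.pi := by rw [hM]; field_simp
  have h2βM : 2*β*M < Real.pi := by nlinarith [hMe]
  have hxπ : x < Real.pi := by linarith
  have htM : x / (2*β) ≤ M := by
    rw [div_le_iff₀ (by positivity)]
    linarith [mul_comm M (2*β)]
  have ht0 : 0 ≤ x / (2*β) := by positivity
  have hsin1nn : 0 ≤ Real.sin (x/2) :=
    Real.sin_nonneg_of_nonneg_of_le_pi (by positivity) (by linarith)
  have hsin2nn : 0 ≤ Real.sin (x/(2*β)) :=
    Real.sin_nonneg_of_nonneg_of_le_pi ht0 (by linarith)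
  constructor
  · -- lower bound
    have hlow : Real.sin M / M * Real.sin (x/2) ≤ Real.sin (x/(2*β)) := by
      have h1 : Real.sin M / M * Real.sin (x/2) ≤ Real.sin M / M * (x/2) :=
        mul_le_mul_of_nonneg_left (Real.sin_le (by positivity)) hc0.le
      have h2 : Real.sin M / M * (x/2) ≤ Real.sin M / M * (x/(2*β)) := by
        apply mul_le_mul_of_nonneg_left _ hc0.le
        rw [div_le_div_iff₀ two_pos (by positivity)]
        nlinarith
      have h3 : Real.sin M / M * (x/(2*β)) ≤ Real.sin (x/(2*β)) := by
        have h := sin_concave_lb hM0 hMπ.le ht0 htM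
        have : Real.sin M / M * (x/(2*β)) = x/(2*β) / M * Real.sin M := by
          field_simp
        rw [this]; exact h
      linarith
    have hln : 0 ≤ Real.sin M / M * Real.sin (x/2) := by positivity
    calc (Real.sin M / M)^2 * Real.sin (x/2)^2 = (Real.sin M / M * Real.sin (x/2))^2 := by ring
      _ ≤ Real.sin (x/(2*β))^2 := pow_le_pow_left₀ hln hlow 2
  · -- upper bound
    have hup : Real.sin (x/(2*β)) ≤ Real.pi/(2*β) * Real.sin (x/2) := by
      have h1 : Real.sin (x/(2*β)) ≤ x/(2*β) := Real.sin_le ht0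
      have h2 : 2 / Real.pi * (x/2) ≤ Real.sin (x/2) :=
        Real.mul_le_sin (by positivity) (by linarith)
      have h3 : x/(2*β) = Real.pi/(2*β) * (2 / Real.pi * (x/2)) := by
        field_simp
      calc Real.sin (x/(2*β)) ≤ x/(2*β) := h1
        _ = Real.pi/(2*β) * (2 / Real.pi * (x/2)) := h3
        _ ≤ Real.pi/(2*β) * Real.sin (x/2) :=
            mul_le_mul_of_nonneg_left h2 (by positivity)
    calc Real.sin (x/(2*β))^2 ≤ (Real.pi/(2*β) * Real.sin (x/2))^2 :=
          pow_le_pow_left₀ hsin2nn hup 2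
      _ = (Real.pi/(2*β))^2 * Real.sin (x/2)^2 := by ring

set_option maxHeartbeats 1000000 in
/-- for β ∈ (0,1), the composition Φ ∘ ψ is bi-Lipschitz on the sector. -/
theorem stmt17 (β : ℝ) (hβ : 0 < β) (hβ1 : β < 1) :
    ∃ K₁ K₂ : ℝ, 0 < K₁ ∧
      ∀ w ∈ sector β, ∀ w' ∈ sector β,
        K₁ * dist w w' ≤ dist (phiPsi β w) (phiPsi β w') ∧
        dist (phiPsi β w) (phiPsi β w') ≤ K₂ * dist w w' := by
  have hπ := Real.pi_pos
  have hπ3 := Real.pi_gt_three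
  have h1β : (0:ℝ) < 1 + β := by linarith
  have hM0 : (0:ℝ) < Real.pi / (1+β) := by positivity
  have hMπ : Real.pi / (1+β) < Real.pi := by rw [div_lt_iff₀ h1β]; nlinarith
  have hsinM : 0 < Real.sin (Real.pi/(1+β)) := Real.sin_pos_of_pos_of_lt_pi hM0 hMπ
  set c : ℝ := Real.sin (Real.pi/(1+β)) / (Real.pi/(1+β)) with hcdef
  set K : ℝ := Real.pi / (2*β) with hKdef
  have hc0 : 0 < c := div_pos hsinM hM0
  have hc1 : c ≤ 1 := by
    rw [hcdef, div_le_one hM0]; exact Real.sin_le hM0.le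
  have hK1 : 1 ≤ K := by
    rw [hKdef, le_div_iff₀ (by positivity)]; nlinarith
  clear_value c K
  refine ⟨c, K, hc0, ?_⟩
  intro w hw w' hw'
  obtain ⟨hr0, hr1, ha0, ha1⟩ := hw
  obtain ⟨hr0', hr1', hb0, hb1⟩ := hw'
  have hwne : w ≠ 0 := norm_pos_iff.mp hr0
  have hwne' : w' ≠ 0 := norm_pos_iff.mp hr0'
  have hw_eq : w = (‖w‖ : ℂ) * Complex.exp ((Complex.arg w : ℝ) * Complex.I) :=
    (Complex.norm_mul_exp_arg_mul_I w).symm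
  have hw'_eq : w' = (‖w'‖ : ℂ) * Complex.exp ((Complex.arg w' : ℝ) * Complex.I) :=
    (Complex.norm_mul_exp_arg_mul_I w').symm
  have hdw : dist w w' ^ 2 = (‖w‖ - ‖w'‖)^2
      + 4 * ‖w‖ * ‖w'‖ * Real.sin ((Complex.arg w - Complex.arg w')/2) ^ 2 := by
    conv_lhs => rw [hw_eq, hw'_eq]
    exact polar_dist_sq _ _ _ _ (norm_nonneg w) (norm_nonneg w')
  have hdf : dist (phiPsi β w) (phiPsi β w') ^ 2 = (‖w‖ - ‖w'‖)^2
      + 4 * ‖w‖ * ‖w'‖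
        * Real.sin ((Complex.arg w - Complex.arg w')/(2*β)) ^ 2 := by
    rw [phiPsi_eq β w hwne, phiPsi_eq β w' hwne',
      polar_dist_sq _ _ _ _ (norm_nonneg w) (norm_nonneg w')]
    have : (Complex.arg w / β - Complex.arg w' / β)/2
        = (Complex.arg w - Complex.arg w')/(2*β) := by
      rw [← sub_div, div_div, mul_comm β 2]
    rw [this]
  have hD : |Complex.arg w - Complex.arg w'| < 2 * Real.pi * β / (1 + β) :=
    abs_sub_lt_iff.2 ⟨by linarith, by linarith⟩
  obtain ⟨hlo, hhi⟩ := sin_sq_key β hβ hβ1 _ hD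
  rw [← hcdef] at hlo
  rw [← hKdef] at hhi
  have hA : 0 ≤ (‖w‖ - ‖w'‖)^2 := sq_nonneg _
  have hB : 0 ≤ 4 * ‖w‖ * ‖w'‖ := by positivity
  have hc2 : c^2 ≤ 1 := by nlinarith
  have hK2 : 1 ≤ K^2 := by nlinarith
  have hsq_low : (c * dist w w') ^ 2 ≤ dist (phiPsi β w) (phiPsi β w') ^ 2 := by
    rw [mul_pow, hdw, hdf]
    have t1 := mul_le_mul_of_nonneg_left hlo hB
    have t2 := mul_le_mul_of_nonneg_right hc2 hA
    nlinarith [t1, t2]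
  have hsq_up : dist (phiPsi β w) (phiPsi β w') ^ 2 ≤ (K * dist w w') ^ 2 := by
    rw [mul_pow, hdw, hdf]
    have t1 := mul_le_mul_of_nonneg_left hhi hB
    have t2 := mul_le_mul_of_nonneg_right hK2 hA
    nlinarith [t1, t2]
  constructor
  · have h1 : 0 ≤ c * dist w w' := mul_nonneg hc0.le dist_nonneg
    have h2 : 0 ≤ dist (phiPsi β w) (phiPsi β w') := dist_nonneg
    have := Real.sqrt_le_sqrt hsq_low
    rwa [Real.sqrt_sq h1, Real.sqrt_sq h2] at this
  · have h1 : 0 ≤ dist (phiPsi β w) (phiPsi β w') := dist_nonneg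
    have h2 : 0 ≤ K * dist w w' := mul_nonneg (by linarith) dist_nonneg
    have := Real.sqrt_le_sqrt hsq_up
    rwa [Real.sqrt_sq h1, Real.sqrt_sq h2] at this
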